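/- Let p be a prime and let A → B be an étale homomorphism of commutative rings. For all integers 1 ≤ m ≤ n, the canonical map W_m(A) ⊗_{W_n(A)} W_n(B) → W_m(B), a ⊗ b ↦ W_m(A→B)(a) · (restriction of b from length n to length m), is an isomorphism. Here W_m(A) is a W_n(A)-algebra via the restriction (truncation) map W_n(A) → W_m(A), and W_n(B) is a W_n(A)-algebra via functoriality. (This is the p-typical case of Corollary 1.1.4(i) of the paper.) -/

import Mathlib

/-!
Statement 4: Let `p` be a prime and `A → B` an étale homomorphism of commutative rings.
For all `1 ≤ m ≤ n`, the canonical map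
`W_m(A) ⊗_{W_n(A)} W_n(B) → W_m(B)`, `a ⊗ b ↦ W_m(A→B)(a) · (restriction of b)`,
is an isomorphism.  Here `W_m(A)` is a `W_n(A)`-algebra via the truncation map and
`W_n(B)` is a `W_n(A)`-algebra via functoriality.
-/

open scoped TensorProduct

namespace TruncatedWittVector

variable {p : ℕ} [Fact p.Prime] {n : ℕ} {R S : Type*} [CommRing R] [CommRing S]

/-- Functoriality of truncated Witt vectors: the ring homomorphism
`W_n(R) → W_n(S)` induced by a ring homomorphism `R → S`. -/
noncomputable def map (f : R →+* S) :
    TruncatedWittVector p n R →+* TruncatedWittVector p n S :=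
  RingHom.liftOfRightInverse (WittVector.truncate n) out truncateFun_out
    ⟨(WittVector.truncate n).comp (WittVector.map f), by
      intro x hx
      rw [WittVector.mem_ker_truncate] at hx
      rw [RingHom.mem_ker, RingHom.comp_apply, ← RingHom.mem_ker,
        WittVector.mem_ker_truncate]
      intro i hi
      rw [WittVector.map_coeff, hx i hi, map_zero]⟩

/-- `map f` is the coefficientwise application of `f`. -/
theorem map_coeff' (f : R →+* S) (x : TruncatedWittVector p n R) (i : Fin n) :
    (map f x).coeff i = f (x.coeff i) := by
  obtain ⟨y, rfl⟩ := WittVector.truncate_surjective p n R x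
  have h1 : map f (WittVector.truncate n y) =
      WittVector.truncate n (WittVector.map f y) :=
    RingHom.liftOfRightInverse_comp_apply _ _ _ _ y
  rw [h1, WittVector.coeff_truncate, WittVector.coeff_truncate, WittVector.map_coeff]

end TruncatedWittVector

namespace TruncatedWittVector

variable {p : ℕ} [Fact p.Prime] {n : ℕ} {R S : Type*} [CommRing R] [CommRing S]

theorem truncate_map' (f : R →+* S) (y : WittVector p R) :
    map f (WittVector.truncate n y) = WittVector.truncate n (WittVector.map f y) :=
  RingHom.liftOfRightInverse_comp_apply _ _ _ _ y

end TruncatedWittVector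


open scoped TensorProduct

section CharPEtale

variable {C S : Type*} [CommRing C] [CommRing S] [Algebra C S] {p : ℕ}

lemma neg_one_pow_prime {R : Type*} [CommRing R] (hp : p.Prime) (hp0 : (p : R) = 0) :
    (-1 : R) ^ p = -1 := by
  rcases hp.eq_two_or_odd' with h2 | hodd
  · subst h2
    have : (2 : R) = 0 := by exact_mod_cast hp0
    have h1 : (1 : R) = -1 := by linear_combination this
    rw [show ((-1 : R) ^ 2 = 1) by ring]
    exact h1
  · exact hodd.neg_one_pow

lemma tensor_comm_of_unramified (hp : p.Prime) (hp0 : (p : S) = 0)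
    [Algebra.FormallyUnramified C S] [Algebra.EssFiniteType C S]
    (hS : ∀ s : S, ∃ c : C, algebraMap C S c = s ^ p) :
    ∀ s : S, s ⊗ₜ[C] (1 : S) = (1 : S) ⊗ₜ[C] s := by
  obtain ⟨t, ht1, ht2⟩ := (Algebra.FormallyUnramified.iff_exists_tensorProduct).mp ‹_›
  have hp0' : (p : S ⊗[C] S) = 0 := by
    calc (p : S ⊗[C] S) = algebraMap S (S ⊗[C] S) (p : S) := (map_natCast _ p).symm
    _ = 0 := by rw [hp0, map_zero]
  -- each generator is nilpotent
  have hnil : ∀ s : S, ((1 : S) ⊗ₜ[C] s - s ⊗ₜ[C] (1 : S)) ^ p = 0 := by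
    intro s
    obtain ⟨c, hc⟩ := hS s
    have hbin := add_pow_prime_eq hp ((1 : S) ⊗ₜ[C] s) (-(s ⊗ₜ[C] (1 : S)))
    rw [sub_eq_add_neg]
    rw [hbin, hp0', zero_mul, zero_mul, zero_mul, add_zero]
    have h1 : ((1 : S) ⊗ₜ[C] s) ^ p = (1 : S) ⊗ₜ[C] (s ^ p) := by
      rw [Algebra.TensorProduct.tmul_pow, one_pow]
    have h2 : (-(s ⊗ₜ[C] (1 : S))) ^ p = -((s ^ p) ⊗ₜ[C] (1 : S)) := by
      rw [neg_pow, Algebra.TensorProduct.tmul_pow, one_pow,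
        neg_one_pow_prime hp hp0', neg_one_mul]
    rw [h1, h2, ← hc]
    have h3 : (1 : S) ⊗ₜ[C] (algebraMap C S c) = (algebraMap C S c) ⊗ₜ[C] (1 : S) := by
      rw [Algebra.algebraMap_eq_smul_one]
      exact (TensorProduct.smul_tmul c (1:S) (1:S)).symm
    rw [h3, add_neg_cancel]
  -- the Kähler ideal is zero
  have hIdeal : ∀ x ∈ KaehlerDifferential.ideal C S, x * t = 0 := by
    intro x hx
    rw [← KaehlerDifferential.span_range_eq_ideal] at hx
    induction hx using Submodule.span_induction with
    | mem x h => obtain ⟨s, rfl⟩ := h; exact ht1 s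
    | zero => rw [zero_mul]
    | add x y _ _ hx hy => rw [add_mul, hx, hy, add_zero]
    | smul a x _ hx => rw [smul_eq_mul, mul_assoc, hx, mul_zero]
  have hu : (1 - t) ∈ KaehlerDifferential.ideal C S := by
    rw [KaehlerDifferential.ideal, RingHom.mem_ker, map_sub, map_one, ht2, sub_self]
  have hunil : IsNilpotent (1 - t) := by
    rw [← mem_nilradical]
    have hle : KaehlerDifferential.ideal C S ≤ nilradical (S ⊗[C] S) := by
      rw [← KaehlerDifferential.span_range_eq_ideal, Ideal.span_le]
      rintro x ⟨s, rfl⟩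
      exact mem_nilradical.mpr ⟨p, hnil s⟩
    exact hle hu
  have hzero : ∀ x ∈ KaehlerDifferential.ideal C S, x = 0 := by
    intro x hx
    have hxu : x = x * (1 - t) := by
      rw [mul_sub, mul_one, hIdeal x hx, sub_zero]
    obtain ⟨N, hN⟩ := hunil
    have : ∀ k : ℕ, x = x * (1 - t) ^ k := by
      intro k
      induction k with
      | zero => simp
      | succ k ih =>
        rw [pow_succ, ← mul_assoc, ← ih]
        exact hxu
    rw [this N, hN, mul_zero]
  intro s
  have := hzero _ (KaehlerDifferential.one_smul_sub_smul_one_mem_ideal C s)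
  -- `one_smul_sub_smul_one_mem_ideal : 1 ⊗ₜ a - a ⊗ₜ 1 ∈ ideal`
  have h := sub_eq_zero.mp this
  exact h.symm

end CharPEtale


lemma surj_of_finite_of_tensor_comm {C S : Type*} [CommRing C] [CommRing S] [Algebra C S]
    [Module.Finite C S]
    (h : ∀ s : S, s ⊗ₜ[C] (1 : S) = (1 : S) ⊗ₜ[C] s) :
    Function.Surjective (algebraMap C S) := by
  rcases subsingleton_or_nontrivial S with hS | hS
  · exact fun s => ⟨0, Subsingleton.elim _ _⟩
  by_contra hsurj
  have hpr : LinearMap.range (Algebra.linearMap C S) ≠ ⊤ := by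
    intro htop
    exact hsurj fun s => by
      have : s ∈ LinearMap.range (Algebra.linearMap C S) := htop ▸ Submodule.mem_top
      exact this
  set pr : Submodule C S := LinearMap.range (Algebra.linearMap C S) with hprdef
  let Q := S ⧸ pr
  haveI : Nontrivial Q := Submodule.Quotient.nontrivial_iff.mpr hpr
  haveI : Module.Finite C Q := Module.Finite.quotient C pr
  have hcoatomic : IsCoatomic (Submodule C Q) :=
    CompleteLattice.coatomic_of_top_compact
      ((Submodule.fg_iff_compact _).1 (Module.finite_def.mp inferInstance))
  obtain htop | ⟨m', hm', -⟩ := hcoatomic.eq_top_or_exists_le_coatom (⊥ : Submodule C Q)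
  · exact absurd htop bot_ne_top
  let Q' := Q ⧸ m'
  haveI : IsSimpleModule C Q' := isSimpleModule_iff_isCoatom.2 hm'
  haveI : Nontrivial Q' := IsSimpleModule.nontrivial C Q'
  obtain ⟨x, hx⟩ := exists_ne (0 : Q')
  set K : Ideal C := LinearMap.ker (LinearMap.toSpanSingleton C Q' x) with hKdef
  haveI hKmax : K.IsMaximal := IsSimpleModule.ker_toSpanSingleton_isMaximal C hx
  -- the projection S → Q'
  let π : S →ₗ[C] Q' := (m'.mkQ).comp pr.mkQ
  have hπsurj : Function.Surjective π :=
    (Submodule.mkQ_surjective m').comp (Submodule.mkQ_surjective pr)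
  have hπ1 : π 1 = 0 := by
    have : (1 : S) ∈ pr := ⟨1, map_one (algebraMap C S)⟩
    have h0 : pr.mkQ 1 = 0 := by
      rwa [Submodule.mkQ_apply, Submodule.Quotient.mk_eq_zero]
    simp only [π, LinearMap.comp_apply]
    rw [h0, map_zero]
  -- Q' ⊗ S is trivial
  haveI hQS : Subsingleton (Q' ⊗[C] S) := by
    have hmapsurj : Function.Surjective (TensorProduct.map π (LinearMap.id (R := C) (M := S))) :=
      TensorProduct.map_surjective hπsurj Function.surjective_id
    have hmapzero : ∀ z : S ⊗[C] S,
        TensorProduct.map π (LinearMap.id (R := C) (M := S)) z = 0 := by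
      intro z
      induction z with
      | zero => simp
      | tmul s s' =>
        have key : s ⊗ₜ[C] s' = (1 : S) ⊗ₜ[C] (s * s') := by
          calc s ⊗ₜ[C] s' = (s ⊗ₜ[C] (1:S)) * ((1:S) ⊗ₜ[C] s') := by
                rw [Algebra.TensorProduct.tmul_mul_tmul, mul_one, one_mul]
          _ = ((1:S) ⊗ₜ[C] s) * ((1:S) ⊗ₜ[C] s') := by rw [h s]
          _ = (1 : S) ⊗ₜ[C] (s * s') := by
                rw [Algebra.TensorProduct.tmul_mul_tmul, mul_one]
        rw [key, TensorProduct.map_tmul, hπ1, TensorProduct.zero_tmul]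
      | add a b ha hb => rw [map_add, ha, hb, add_zero]
    constructor
    intro a b
    obtain ⟨za, rfl⟩ := hmapsurj a
    obtain ⟨zb, rfl⟩ := hmapsurj b
    rw [hmapzero za, hmapzero zb]
  -- transfer to C ⧸ K
  have e1 : (C ⧸ K) ≃ₗ[C] Q' :=
    LinearMap.quotKerEquivOfSurjective _ (IsSimpleModule.toSpanSingleton_surjective C hx)
  haveI : Subsingleton ((C ⧸ K) ⊗[C] S) :=
    (TensorProduct.congr e1 (LinearEquiv.refl C S)).toEquiv.subsingleton
  haveI : Subsingleton (S ⧸ (K • ⊤ : Submodule C S)) :=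
    (TensorProduct.quotTensorEquivQuotSMul S K).symm.toEquiv.subsingleton
  have hKtop : (K • ⊤ : Submodule C S) = ⊤ :=
    Submodule.Quotient.subsingleton_iff.mp ‹_›
  -- lying over gives a contradiction
  haveI : Algebra.IsIntegral C S := Algebra.IsIntegral.of_finite C S
  have hker : Ideal.comap (algebraMap C S) (⊥ : Ideal S) ≤ K := by
    intro c hc
    have hc0 : algebraMap C S c = 0 := by
      simpa using hc
    rw [hKdef, LinearMap.mem_ker, LinearMap.toSpanSingleton_apply]
    obtain ⟨s₀, rfl⟩ := hπsurj x
    rw [← map_smul, Algebra.smul_def, hc0, zero_mul, map_zero]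
  obtain ⟨q, -, hqprime, hqcomap⟩ :=
    Ideal.exists_ideal_over_prime_of_isIntegral K ⊥ hker
  have hle : (K • ⊤ : Submodule C S) ≤ Submodule.restrictScalars C (q : Ideal S) := by
    refine Submodule.smul_le.2 fun c hc s _ => ?_
    have : algebraMap C S c ∈ q := by
      rw [← hqcomap] at hc; exact hc
    rw [Algebra.smul_def]
    exact Ideal.mul_mem_right _ _ this
  have h1q : (1 : S) ∈ q := hle (by rw [hKtop]; exact Submodule.mem_top)
  exact hqprime.ne_top (Ideal.eq_top_of_isUnit_mem _ h1q isUnit_one)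


section SpanLemma

universe u
variable {p : ℕ} {A B : Type u} [CommRing A] [CommRing B] [Algebra A B]
  [Algebra.Etale A B]

/-- In the mod-p quotient of an étale algebra, everything is an `A`-combination of p-th powers. -/
lemma quotient_span_pow (hp : p.Prime) :
    ∀ x : B ⧸ (Ideal.span {(p : B)}),
      x ∈ Submodule.span A (Set.range fun c : B ⧸ (Ideal.span {(p : B)}) => c ^ p) := by
  set I : Ideal B := Ideal.span {(p : B)}
  set S := B ⧸ I
  have hp0 : (p : S) = 0 := by
    rw [← map_natCast (Ideal.Quotient.mk I) p]
    exact Ideal.Quotient.eq_zero_iff_mem.2 (Ideal.subset_span rfl)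
  set C : Subalgebra A S := Algebra.adjoin A (Set.range fun c : S => c ^ p) with hC
  haveI : Algebra.FormallyUnramified A S := by
    haveI : Algebra.FormallyUnramified A B := inferInstance
    infer_instance
  haveI hFU : Algebra.FormallyUnramified C S :=
    Algebra.FormallyUnramified.of_restrictScalars A C S
  haveI hFTAS : Algebra.FiniteType A S := by
    haveI : Algebra.FiniteType A B := inferInstance
    exact Algebra.FiniteType.of_surjective (Ideal.Quotient.mkₐ A I)
      (Ideal.Quotient.mk_surjective)
  haveI hFTCS : Algebra.FiniteType C S :=
    Algebra.FiniteType.of_restrictScalars_finiteType A C S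
  haveI : Algebra.EssFiniteType C S := Algebra.EssFiniteType.of_finiteType C S
  have hS : ∀ s : S, ∃ c : C, algebraMap C S c = s ^ p :=
    fun s => ⟨⟨s ^ p, Algebra.subset_adjoin ⟨s, rfl⟩⟩, rfl⟩
  have hcomm := tensor_comm_of_unramified hp hp0 hS
  haveI : Algebra.IsIntegral C S := by
    constructor
    intro s
    obtain ⟨c, hc⟩ := hS s
    refine ⟨Polynomial.X ^ p - Polynomial.C c, Polynomial.monic_X_pow_sub_C c hp.ne_zero, ?_⟩
    simp [Polynomial.eval₂_sub, hc]
  haveI : Module.Finite C S := Algebra.IsIntegral.finite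
  have hsurj := surj_of_finite_of_tensor_comm (C := C) (S := S) hcomm
  intro x
  obtain ⟨⟨y, hy⟩, rfl⟩ := hsurj x
  let M : Submonoid S :=
    { carrier := Set.range fun c : S => c ^ p
      mul_mem' := fun ha hb => by
        obtain ⟨c, rfl⟩ := ha; obtain ⟨d, rfl⟩ := hb; exact ⟨c * d, mul_pow c d p⟩
      one_mem' := ⟨1, one_pow p⟩ }
  have hspan : Subalgebra.toSubmodule C = Submodule.span A (Set.range fun c : S => c ^ p) := by
    have hsetM : (↑(Submonoid.closure (Set.range fun c : S => c ^ p)) : Set S)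
        = Set.range fun c : S => c ^ p := by
      rw [show (Set.range fun c : S => c ^ p) = (M : Set S) from rfl, Submonoid.closure_eq]
    rw [hC, Algebra.adjoin_eq_span, hsetM]
  have : y ∈ Subalgebra.toSubmodule C := hy
  rw [hspan] at this
  exact this

end SpanLemma

section SpanLemma2
universe v
variable {p : ℕ} {A B : Type v} [CommRing A] [CommRing B] [Algebra A B]
  [Algebra.Etale A B]

lemma quotient_span_pow_iter (hp : p.Prime) (t : ℕ) :
    ∀ x : B ⧸ (Ideal.span {(p : B)}),
      x ∈ Submodule.span A
        (Set.range fun c : B ⧸ (Ideal.span {(p : B)}) => c ^ p ^ (t + 1)) := by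
  set I : Ideal B := Ideal.span {(p : B)}
  set S := B ⧸ I
  have hp0 : (p : S) = 0 := by
    rw [← map_natCast (Ideal.Quotient.mk I) p]
    exact Ideal.Quotient.eq_zero_iff_mem.2 (Ideal.subset_span rfl)
  induction t with
  | zero =>
    intro x
    have := quotient_span_pow (p := p) (A := A) (B := B) hp x
    simpa [pow_one] using this
  | succ t IH =>
    intro x
    have h1 := quotient_span_pow (p := p) (A := A) (B := B) hp x
    induction h1 using Submodule.span_induction with
    | zero => exact zero_mem _
    | add y z _ _ hy hz => exact add_mem hy hz
    | smul a y _ hy => exact Submodule.smul_mem _ a hy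
    | mem y hy =>
      obtain ⟨c, rfl⟩ := hy
      have h2 := IH c
      induction h2 using Submodule.span_induction with
      | zero =>
        show (0 : S) ^ p ∈ _
        rw [zero_pow hp.ne_zero]; exact zero_mem _
      | add y z _ _ hy hz =>
        show (y + z) ^ p ∈ _
        rw [add_pow_prime_eq hp, hp0, zero_mul, zero_mul, zero_mul, add_zero]
        exact add_mem hy hz
      | smul a y _ hy =>
        show (a • y) ^ p ∈ _
        rw [smul_pow]
        exact Submodule.smul_mem _ _ hy
      | mem y hy =>
        obtain ⟨d, rfl⟩ := hy
        refine Submodule.subset_span ⟨d, ?_⟩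
        show d ^ p ^ (t + 1 + 1) = (d ^ p ^ (t + 1)) ^ p
        rw [← pow_mul, ← pow_succ]

lemma span_pow_p_add_p (hp : p.Prime) (s : ℕ) (hs : s ≠ 0) (b : B) :
    ∃ u d, u ∈ Submodule.span A (Set.range fun c : B => c ^ p ^ s) ∧ b = u + p * d := by
  obtain ⟨t, rfl⟩ := Nat.exists_eq_succ_of_ne_zero hs
  set I : Ideal B := Ideal.span {(p : B)}
  set S := B ⧸ I
  let q : B →ₐ[A] S := Ideal.Quotient.mkₐ A I
  have hqsurj : Function.Surjective q := Ideal.Quotient.mk_surjective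
  have hmap : Submodule.span A (Set.range fun c : S => c ^ p ^ (t + 1)) ≤
      Submodule.map q.toLinearMap
        (Submodule.span A (Set.range fun c : B => c ^ p ^ (t + 1))) := by
    rw [Submodule.span_le]
    rintro _ ⟨c, rfl⟩
    obtain ⟨c', rfl⟩ := hqsurj c
    exact ⟨c' ^ p ^ (t + 1), Submodule.subset_span ⟨c', rfl⟩, by simp [map_pow]⟩
  have hx := hmap (quotient_span_pow_iter (p := p) (A := A) (B := B) hp t (q b))
  obtain ⟨u, hu, hqu⟩ := hx
  have hqu' : q u = q b := hqu
  have hsub : b - u ∈ I := by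
    have : q (b - u) = 0 := by rw [map_sub, hqu', sub_self]
    exact Ideal.Quotient.eq_zero_iff_mem.1 this
  obtain ⟨d, hd⟩ := Ideal.mem_span_singleton'.1 hsub
  exact ⟨u, d, hu, by rw [mul_comm] at hd; linear_combination -hd⟩

end SpanLemma2


namespace WittVector

variable {p : ℕ} [hp : Fact p.Prime] {R S : Type*} [CommRing R] [CommRing S]

local notation "𝕎" => WittVector p

theorem coeff_zero_eq_ghost (x : 𝕎 R) : ghostComponent 0 x = x.coeff 0 := by
  rw [ghostComponent_apply, wittPolynomial_zero, MvPolynomial.aeval_X]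

theorem add_coeff_zero' (x y : 𝕎 R) : (x + y).coeff 0 = x.coeff 0 + y.coeff 0 := by
  rw [← coeff_zero_eq_ghost, ← coeff_zero_eq_ghost, ← coeff_zero_eq_ghost, map_add]

theorem mul_coeff_zero' (x y : 𝕎 R) : (x * y).coeff 0 = x.coeff 0 * y.coeff 0 := by
  rw [← coeff_zero_eq_ghost, ← coeff_zero_eq_ghost, ← coeff_zero_eq_ghost, map_mul]

theorem nsmul_coeff_zero (n : ℕ) (x : 𝕎 R) : (n • x).coeff 0 = n • x.coeff 0 := by
  rw [← coeff_zero_eq_ghost, ← coeff_zero_eq_ghost, map_nsmul]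

/-- Coefficients of iterated Verschiebung below the shift vanish. -/
theorem iterate_verschiebung_coeff_lt (x : 𝕎 R) (k : ℕ) :
    ∀ i < k, (verschiebung^[k] x).coeff i = 0 := by
  induction k with
  | zero => intro i hi; omega
  | succ k IH =>
    intro i hi
    rw [Function.iterate_succ_apply']
    match i with
    | 0 => exact verschiebung_coeff_zero _
    | (j+1) =>
      rw [verschiebung_coeff_succ]
      exact IH j (by omega)

theorem iterate_verschiebung_add (x y : 𝕎 R) (k : ℕ) :
    verschiebung^[k] (x + y) = verschiebung^[k] x + verschiebung^[k] y := by
  induction k with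
  | zero => rfl
  | succ k IH => rw [Function.iterate_succ_apply', Function.iterate_succ_apply',
      Function.iterate_succ_apply', IH, map_add verschiebung]

/-- An element whose first `k` coefficients vanish is an iterated Verschiebung. -/
theorem exists_eq_iterate_verschiebung {x : 𝕎 R} {k : ℕ} (h : ∀ i < k, x.coeff i = 0) :
    ∃ w : 𝕎 R, x = verschiebung^[k] w := by
  refine ⟨@WittVector.mk p R (fun i => x.coeff (i + k)), ?_⟩
  apply WittVector.ext
  intro n
  rcases lt_or_ge n k with hn | hn
  · rw [h n hn, iterate_verschiebung_coeff_lt _ k n hn]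
  · obtain ⟨j, rfl⟩ : ∃ j, n = j + k := ⟨n - k, by omega⟩
    rw [iterate_verschiebung_coeff]
    rfl

theorem mem_ker_iff_coeff {k : ℕ} (x : 𝕎 R) :
    x ∈ RingHom.ker (WittVector.truncate (p := p) (R := R) k) ↔ ∀ i < k, x.coeff i = 0 :=
  WittVector.mem_ker_truncate _ _

/-- Additivity of the `k`-th coefficient on the kernel of truncation. -/
theorem add_coeff_of_ker {k : ℕ} {x y : 𝕎 R} (hx : ∀ i < k, x.coeff i = 0)
    (hy : ∀ i < k, y.coeff i = 0) : (x + y).coeff k = x.coeff k + y.coeff k := by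
  obtain ⟨u, rfl⟩ := exists_eq_iterate_verschiebung hx
  obtain ⟨v, rfl⟩ := exists_eq_iterate_verschiebung hy
  rw [← iterate_verschiebung_add]
  have h0 : ∀ z : 𝕎 R, (verschiebung^[k] z).coeff k = z.coeff 0 := by
    intro z
    have := iterate_verschiebung_coeff (p := p) z k 0
    rwa [zero_add] at this
  rw [h0, h0, h0, add_coeff_zero']

theorem neg_coeff_of_ker {k : ℕ} {x : 𝕎 R} (hx : ∀ i < k, x.coeff i = 0) :
    (-x).coeff k = -(x.coeff k) := by
  have hnx : ∀ i < k, (-x).coeff i = 0 := by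
    intro i hi
    have : -x ∈ RingHom.ker (WittVector.truncate (p := p) (R := R) k) :=
      neg_mem ((mem_ker_iff_coeff x).2 hx)
    exact (mem_ker_iff_coeff _).1 this i hi
  have := add_coeff_of_ker hx hnx
  rw [add_neg_cancel] at this
  have h0 : (0 : 𝕎 R).coeff k = 0 := WittVector.zero_coeff p R k
  rw [h0] at this
  linear_combination -this

theorem ghostComponent_frobenius_iterate (k : ℕ) (x : 𝕎 R) :
    ghostComponent 0 (frobenius^[k] x) = ghostComponent k x := by
  have key : ∀ (k j : ℕ) (x : 𝕎 R),
      ghostComponent j (frobenius^[k] x) = ghostComponent (j + k) x := by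
    intro k
    induction k with
    | zero => intro j x; rw [Function.iterate_zero_apply, add_zero]
    | succ k IH =>
      intro j x
      rw [Function.iterate_succ_apply, IH, ghostComponent_frobenius, Nat.add_assoc]
  have := key k 0 x
  rwa [zero_add] at this

/-- Naturality of Frobenius with respect to `map`. -/
theorem map_frobenius' (f : R →+* S) (x : 𝕎 R) :
    WittVector.map f (frobenius x) = frobenius (WittVector.map f x) := by
  apply WittVector.ext
  intro n
  rw [map_coeff, coeff_frobenius, coeff_frobenius]
  show f (MvPolynomial.aeval x.coeff (frobeniusPoly p n)) =
    MvPolynomial.aeval ((WittVector.map f x).coeff) (frobeniusPoly p n)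
  have hcoeff : ((WittVector.map f x).coeff) = f ∘ x.coeff := by
    funext i; rw [map_coeff]; rfl
  rw [hcoeff]
  simp only [MvPolynomial.aeval_def]
  rw [MvPolynomial.eval₂_comp_left f (algebraMap ℤ R) x.coeff]
  congr 1
  exact (f.comp (algebraMap ℤ R)).ext_int (algebraMap ℤ S)

theorem map_iterate_frobenius (f : R →+* S) (x : 𝕎 R) (k : ℕ) :
    WittVector.map f (frobenius^[k] x) = frobenius^[k] (WittVector.map f x) := by
  induction k with
  | zero => rfl
  | succ k IH => rw [Function.iterate_succ_apply', Function.iterate_succ_apply',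
      map_frobenius', IH]

theorem map_iterate_verschiebung (f : R →+* S) (x : 𝕎 R) (k : ℕ) :
    WittVector.map f (verschiebung^[k] x) = verschiebung^[k] (WittVector.map f x) := by
  induction k with
  | zero => rfl
  | succ k IH => rw [Function.iterate_succ_apply', Function.iterate_succ_apply',
      map_verschiebung, IH]

theorem iterate_frobenius_mul (x y : 𝕎 R) (k : ℕ) :
    frobenius^[k] (x * y) = frobenius^[k] x * frobenius^[k] y := by
  induction k with
  | zero => rfl
  | succ k IH => rw [Function.iterate_succ_apply', Function.iterate_succ_apply',
      Function.iterate_succ_apply', IH, map_mul]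

theorem iterate_verschiebung_nsmul (n : ℕ) (x : 𝕎 R) (k : ℕ) :
    verschiebung^[k] (n • x) = n • verschiebung^[k] x := by
  induction k with
  | zero => rfl
  | succ k IH => rw [Function.iterate_succ_apply', Function.iterate_succ_apply', IH,
      map_nsmul]

/-- `F^[r] (V^[r+j] w) = V^[j] w * p^r`. -/
theorem iterate_frobenius_natCast (n r : ℕ) :
    frobenius^[r] ((n : 𝕎 R)) = (n : 𝕎 R) := by
  induction r with
  | zero => rfl
  | succ r IHp => rw [Function.iterate_succ_apply', IHp, map_natCast]

/-- `F^[r] (V^[r+j] w) = V^[j] w * p^r`. -/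
theorem iterate_frobenius_iterate_verschiebung (w : 𝕎 R) (r j : ℕ) :
    frobenius^[r] (verschiebung^[r + j] w) = verschiebung^[j] w * (p : 𝕎 R) ^ r := by
  induction r with
  | zero => rw [Function.iterate_zero_apply, zero_add, pow_zero, mul_one]
  | succ r IH =>
    have harith : (r + 1) + j = (r + j) + 1 := by omega
    rw [Function.iterate_succ_apply, harith, Function.iterate_succ_apply',
      frobenius_verschiebung]
    rw [iterate_frobenius_mul, IH, iterate_frobenius_natCast, mul_assoc, ← pow_succ]

theorem iterate_verschiebung_zero' (k : ℕ) : verschiebung^[k] (0 : 𝕎 R) = 0 := by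
  induction k with
  | zero => rfl
  | succ k IH => rw [Function.iterate_succ_apply', IH, map_zero]

theorem iterate_verschiebung_sub (x y : 𝕎 R) (k : ℕ) :
    verschiebung^[k] (x - y) = verschiebung^[k] x - verschiebung^[k] y := by
  induction k with
  | zero => rfl
  | succ k IH => rw [Function.iterate_succ_apply', Function.iterate_succ_apply',
      Function.iterate_succ_apply', IH, map_sub]

theorem iterate_verschiebung_zsmul (a : ℤ) (x : 𝕎 R) (k : ℕ) :
    verschiebung^[k] (a • x) = a • verschiebung^[k] x := by
  induction k with
  | zero => rfl
  | succ k IH => rw [Function.iterate_succ_apply', Function.iterate_succ_apply', IH,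
      map_zsmul]

theorem iterate_frobenius_zero' (k : ℕ) : frobenius^[k] (0 : 𝕎 R) = 0 := by
  induction k with
  | zero => rfl
  | succ k IH => rw [Function.iterate_succ_apply', IH, map_zero]

theorem iterate_frobenius_add (x y : 𝕎 R) (k : ℕ) :
    frobenius^[k] (x + y) = frobenius^[k] x + frobenius^[k] y := by
  induction k with
  | zero => rfl
  | succ k IH => rw [Function.iterate_succ_apply', Function.iterate_succ_apply',
      Function.iterate_succ_apply', IH, map_add]

theorem iterate_frobenius_sub (x y : 𝕎 R) (k : ℕ) :
    frobenius^[k] (x - y) = frobenius^[k] x - frobenius^[k] y := by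
  induction k with
  | zero => rfl
  | succ k IH => rw [Function.iterate_succ_apply', Function.iterate_succ_apply',
      Function.iterate_succ_apply', IH, map_sub]

theorem iterate_frobenius_zsmul (a : ℤ) (x : 𝕎 R) (k : ℕ) :
    frobenius^[k] (a • x) = a • frobenius^[k] x := by
  induction k with
  | zero => rfl
  | succ k IH => rw [Function.iterate_succ_apply', Function.iterate_succ_apply', IH,
      map_zsmul]

theorem finset_sum_coeff_of_ker {ι : Type*} (s : Finset ι) (gg : ι → 𝕎 R) (k : ℕ)
    (hg : ∀ i ∈ s, ∀ j < k, (gg i).coeff j = 0) :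
    (∀ j < k, (∑ i ∈ s, gg i).coeff j = 0) ∧
      (∑ i ∈ s, gg i).coeff k = ∑ i ∈ s, (gg i).coeff k := by
  classical
  induction s using Finset.induction_on with
  | empty =>
    constructor
    · intro j hj
      rw [Finset.sum_empty, WittVector.zero_coeff]
    · rw [Finset.sum_empty, Finset.sum_empty, WittVector.zero_coeff]
  | insert a s hni IH =>
    have hga := hg a (Finset.mem_insert_self a s)
    have hrest := IH (fun i hi => hg i (Finset.mem_insert_of_mem hi))
    constructor
    · intro j hj
      rw [Finset.sum_insert hni]
      have : gg a + ∑ i ∈ s, gg i ∈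
          RingHom.ker (WittVector.truncate (p := p) (R := R) k) :=
        add_mem ((mem_ker_iff_coeff _).2 hga) ((mem_ker_iff_coeff _).2 hrest.1)
      exact (mem_ker_iff_coeff _).1 this j hj
    · rw [Finset.sum_insert hni, Finset.sum_insert hni,
        add_coeff_of_ker hga hrest.1, hrest.2]


end WittVector

section Master

universe u

namespace WittVector

variable {p : ℕ} [hp : Fact p.Prime] {A B : Type u} [CommRing A] [CommRing B] [Algebra A B]
  [Algebra.Etale A B]

local notation "𝕎" => WittVector p

/-- The ℤ-span of elements `map f α * F^[r] y`. -/
noncomputable def mSet (p : ℕ) [Fact p.Prime] (A B : Type u) [CommRing A] [CommRing B]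
    [Algebra A B] (r : ℕ) : Submodule ℤ (WittVector p B) :=
  Submodule.span ℤ {w | ∃ (α : WittVector p A) (y : WittVector p B),
    w = WittVector.map (algebraMap A B) α * frobenius^[r] y}

theorem step_one (k : ℕ) (c : 𝕎 B) :
    ∃ ν ∈ mSet p A B 1, c - ν ∈ RingHom.ker (WittVector.truncate (p := p) (R := B) k) := by
  induction k with
  | zero =>
    exact ⟨0, zero_mem _, by rw [sub_zero, mem_ker_iff_coeff]; omega⟩
  | succ k IH =>
    obtain ⟨ν, hν, hker⟩ := IH
    set f := algebraMap A B
    set e := c - ν with he_def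
    have he : ∀ i < k, e.coeff i = 0 := (mem_ker_iff_coeff e).1 hker
    obtain ⟨w, hw⟩ := exists_eq_iterate_verschiebung he
    set b := w.coeff 0 with hb_def
    obtain ⟨u, d, hu, hb⟩ := span_pow_p_add_p (A := A) hp.out (k+1) (Nat.succ_ne_zero k) b
    rw [Finsupp.mem_span_range_iff_exists_finsupp] at hu
    obtain ⟨t, ht⟩ := hu
    -- the two corrections
    set g : B → A → 𝕎 B := fun cc a =>
      WittVector.map f (verschiebung^[k] (teichmuller p a)) * frobenius (teichmuller p cc)
      with hg_def
    set ν₂ : 𝕎 B := WittVector.map f 1 * frobenius (verschiebung^[k+1] (teichmuller p d))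
      with hν₂_def
    set ν' : 𝕎 B := t.sum g + ν₂ with hν'_def
    have hν'mem : ν' ∈ mSet p A B 1 := by
      refine add_mem ?_ ?_
      · rw [Finsupp.sum]
        refine Submodule.sum_mem _ fun cc _ => Submodule.subset_span
          ⟨verschiebung^[k] (teichmuller p (t cc)), teichmuller p cc, ?_⟩
        rw [Function.iterate_one]
      · exact Submodule.subset_span ⟨1, verschiebung^[k+1] (teichmuller p d), by
          rw [Function.iterate_one]⟩
    -- rewrite each generator as an iterated Verschiebung
    have hg_eq : ∀ cc a, g cc a =
        verschiebung^[k] (teichmuller p (f a) * frobenius^[k+1] (teichmuller p cc)) := by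
      intro cc a
      show WittVector.map f (verschiebung^[k] (teichmuller p a)) *
        frobenius (teichmuller p cc) = _
      rw [map_iterate_verschiebung, map_teichmuller,
        iterate_verschiebung_mul_left, ← Function.iterate_succ_apply]
    have hg_lt : ∀ cc a, ∀ j < k, (g cc a).coeff j = 0 := by
      intro cc a j hj
      rw [hg_eq]
      exact iterate_verschiebung_coeff_lt _ k j hj
    have hg_k : ∀ cc a, (g cc a).coeff k = f a * cc ^ p ^ (k+1) := by
      intro cc a
      rw [hg_eq]
      have h1 := iterate_verschiebung_coeff (p := p)
        (teichmuller p (f a) * frobenius^[k+1] (teichmuller p cc)) k 0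
      rw [zero_add] at h1
      rw [h1, mul_coeff_zero', teichmuller_coeff_zero]
      congr 1
      rw [← coeff_zero_eq_ghost, ghostComponent_frobenius_iterate,
        ghostComponent_teichmuller]
    have hν₂_eq : ν₂ = verschiebung^[k] (teichmuller p d) * (p : 𝕎 B) := by
      rw [hν₂_def, map_one, one_mul]
      have h2 := iterate_frobenius_iterate_verschiebung (teichmuller p d) 1 k
      rw [Function.iterate_one, pow_one] at h2
      rw [show k + 1 = 1 + k from by omega, h2]
    have hν₂_lt : ∀ j < k, ν₂.coeff j = 0 := by
      intro j hj
      have : ν₂ ∈ RingHom.ker (WittVector.truncate (p := p) (R := B) k) := by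
        rw [hν₂_eq]
        exact Ideal.mul_mem_right _ _ ((mem_ker_iff_coeff _).2
          (iterate_verschiebung_coeff_lt _ k))
      exact (mem_ker_iff_coeff _).1 this j hj
    have hν₂_k : ν₂.coeff k = p * d := by
      rw [hν₂_eq]
      have hsm : verschiebung^[k] (teichmuller p d) * (p : 𝕎 B)
          = verschiebung^[k] (p • teichmuller p d) := by
        rw [iterate_verschiebung_nsmul, mul_comm]
        exact (nsmul_eq_mul _ _).symm
      rw [hsm]
      have h1 := iterate_verschiebung_coeff (p := p) (p • teichmuller p d) k 0
      rw [zero_add] at h1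
      rw [h1, nsmul_coeff_zero, teichmuller_coeff_zero, nsmul_eq_mul]
    -- coefficients of the correction
    have htsum_lt : ∀ j < k, (t.sum g).coeff j = 0 := by
      rw [Finsupp.sum]
      exact (finset_sum_coeff_of_ker _ _ k (fun cc _ => hg_lt cc (t cc))).1
    have htsum_k : (t.sum g).coeff k = u := by
      rw [Finsupp.sum,
        (finset_sum_coeff_of_ker _ _ k (fun cc _ => hg_lt cc (t cc))).2, ← ht,
        Finsupp.sum]
      exact Finset.sum_congr rfl fun cc _ => by rw [hg_k, Algebra.smul_def]
    have hν'_lt : ∀ j < k, ν'.coeff j = 0 := by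
      intro j hj
      have : ν' ∈ RingHom.ker (WittVector.truncate (p := p) (R := B) k) :=
        add_mem ((mem_ker_iff_coeff _).2 htsum_lt) ((mem_ker_iff_coeff _).2 hν₂_lt)
      exact (mem_ker_iff_coeff _).1 this j hj
    have hν'_k : ν'.coeff k = b := by
      rw [hν'_def, add_coeff_of_ker htsum_lt hν₂_lt, htsum_k, hν₂_k, hb]
    have he_k : e.coeff k = b := by
      rw [hw]
      have h1 := iterate_verschiebung_coeff (p := p) w k 0
      rw [zero_add] at h1
      rw [h1]
    refine ⟨ν + ν', add_mem hν hν'mem, ?_⟩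
    have hce : c - (ν + ν') = e - ν' := by rw [he_def]; ring
    rw [hce, mem_ker_iff_coeff]
    intro j hj
    rcases Nat.lt_succ_iff_lt_or_eq.1 hj with hjk | rfl
    · have : e - ν' ∈ RingHom.ker (WittVector.truncate (p := p) (R := B) k) :=
        sub_mem ((mem_ker_iff_coeff _).2 he) ((mem_ker_iff_coeff _).2 hν'_lt)
      exact (mem_ker_iff_coeff _).1 this j hjk
    · have hneg : ∀ i < j, (-ν').coeff i = 0 := by
        intro i hi
        have : -ν' ∈ RingHom.ker (WittVector.truncate (p := p) (R := B) j) :=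
          neg_mem ((mem_ker_iff_coeff _).2 hν'_lt)
        exact (mem_ker_iff_coeff _).1 this i hi
      rw [sub_eq_add_neg, add_coeff_of_ker he hneg, neg_coeff_of_ker hν'_lt,
        he_k, hν'_k, add_neg_cancel]

theorem mul_map_frobenius_mem (α : 𝕎 A) (r : ℕ) {x : 𝕎 B} (hx : x ∈ mSet p A B 1) :
    WittVector.map (algebraMap A B) α * frobenius^[r] x ∈ mSet p A B (r+1) := by
  induction hx using Submodule.span_induction with
  | mem y hy =>
    obtain ⟨β, z, rfl⟩ := hy
    refine Submodule.subset_span ⟨α * frobenius^[r] β, z, ?_⟩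
    rw [Function.iterate_one, iterate_frobenius_mul, map_mul, map_iterate_frobenius,
      ← Function.iterate_succ_apply, mul_assoc]
  | zero =>
    rw [iterate_frobenius_zero', mul_zero]
    exact zero_mem _
  | add y z _ _ hy hz =>
    rw [iterate_frobenius_add, mul_add]
    exact add_mem hy hz
  | smul a y _ hy =>
    rw [iterate_frobenius_zsmul, mul_smul_comm]
    exact Submodule.smul_mem _ a hy

theorem step_iter (r k : ℕ) (c : 𝕎 B) :
    ∃ ν ∈ mSet p A B r, c - ν ∈ RingHom.ker (WittVector.truncate (p := p) (R := B) k) := by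
  induction r generalizing c with
  | zero =>
    refine ⟨c, Submodule.subset_span ⟨1, c, by rw [map_one, one_mul]; rfl⟩, ?_⟩
    rw [sub_self]
    exact zero_mem _
  | succ r IH =>
    obtain ⟨ν, hν, hc⟩ := IH c
    have aux : ∀ x ∈ mSet p A B r, ∃ x' ∈ mSet p A B (r+1),
        x - x' ∈ RingHom.ker (WittVector.truncate (p := p) (R := B) k) := by
      intro x hx
      induction hx using Submodule.span_induction with
      | mem y hy =>
        obtain ⟨α, z, rfl⟩ := hy
        obtain ⟨zν, hzν, hz⟩ := step_one (A := A) (k + r) z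
        obtain ⟨w, hw⟩ := exists_eq_iterate_verschiebung ((mem_ker_iff_coeff _).1 hz)
        refine ⟨WittVector.map (algebraMap A B) α * frobenius^[r] zν,
          mul_map_frobenius_mem α r hzν, ?_⟩
        have hdiff : WittVector.map (algebraMap A B) α * frobenius^[r] z -
            WittVector.map (algebraMap A B) α * frobenius^[r] zν =
            WittVector.map (algebraMap A B) α * frobenius^[r] (z - zν) := by
          rw [iterate_frobenius_sub, mul_sub]
        rw [hdiff, hw, show k + r = r + k from by omega,
          iterate_frobenius_iterate_verschiebung]
        exact Ideal.mul_mem_left _ _ (Ideal.mul_mem_right _ _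
          ((mem_ker_iff_coeff _).2 (iterate_verschiebung_coeff_lt _ k)))
      | zero =>
        exact ⟨0, zero_mem _, by rw [sub_zero]; exact zero_mem _⟩
      | add y z _ _ hy hz =>
        obtain ⟨y', hy', hyk⟩ := hy
        obtain ⟨z', hz', hzk⟩ := hz
        refine ⟨y' + z', add_mem hy' hz', ?_⟩
        have : y + z - (y' + z') = (y - y') + (z - z') := by ring
        rw [this]
        exact add_mem hyk hzk
      | smul a y _ hy =>
        obtain ⟨y', hy', hyk⟩ := hy
        refine ⟨a • y', Submodule.smul_mem _ a hy', ?_⟩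
        rw [← smul_sub]
        rw [zsmul_eq_mul]
        exact Ideal.mul_mem_left _ _ hyk
    obtain ⟨ν', hν', hdiff⟩ := aux ν hν
    refine ⟨ν', hν', ?_⟩
    have : c - ν' = (c - ν) + (ν - ν') := by ring
    rw [this]
    exact add_mem hc hdiff

theorem key_decomp (m n : ℕ) (hmn : m ≤ n) (z : 𝕎 B) (hz : ∀ i < m, z.coeff i = 0) :
    ∃ ν ∈ Submodule.span ℤ {w : 𝕎 B | ∃ (α : 𝕎 A) (y : 𝕎 B),
        (∀ i < m, α.coeff i = 0) ∧ w = WittVector.map (algebraMap A B) α * y},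
      z - ν ∈ RingHom.ker (WittVector.truncate (p := p) (R := B) n) := by
  obtain ⟨w, rfl⟩ := exists_eq_iterate_verschiebung hz
  have haux : ∀ x ∈ mSet p A B m, verschiebung^[m] x ∈
      Submodule.span ℤ {w : 𝕎 B | ∃ (α : 𝕎 A) (y : 𝕎 B),
      (∀ i < m, α.coeff i = 0) ∧ w = WittVector.map (algebraMap A B) α * y} := by
    intro x hx
    induction hx using Submodule.span_induction with
    | mem y hy =>
      obtain ⟨α, z, rfl⟩ := hy
      have : verschiebung^[m] (WittVector.map (algebraMap A B) α * frobenius^[m] z)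
          = WittVector.map (algebraMap A B) (verschiebung^[m] α) * z := by
        rw [← iterate_verschiebung_mul_left, map_iterate_verschiebung]
      rw [this]
      exact Submodule.subset_span ⟨verschiebung^[m] α, z,
        iterate_verschiebung_coeff_lt _ m, rfl⟩
    | zero =>
      rw [iterate_verschiebung_zero']
      exact zero_mem _
    | add y z _ _ hy hz =>
      rw [iterate_verschiebung_add]
      exact add_mem hy hz
    | smul a y _ hy =>
      rw [iterate_verschiebung_zsmul]
      exact Submodule.smul_mem _ a hy
  obtain ⟨ν₀, hν₀, he⟩ := step_iter (A := A) m (n - m) w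
  refine ⟨verschiebung^[m] ν₀, haux ν₀ hν₀, ?_⟩
  rw [← iterate_verschiebung_sub, mem_ker_iff_coeff]
  intro i hi
  rcases lt_or_ge i m with him | him
  · exact iterate_verschiebung_coeff_lt _ m i him
  · obtain ⟨j, rfl⟩ : ∃ j, i = j + m := ⟨i - m, by omega⟩
    rw [iterate_verschiebung_coeff]
    exact (mem_ker_iff_coeff _).1 he j (by omega)

end WittVector

end Master


universe u

theorem stmt_4 (p : ℕ) [Fact p.Prime] (A B : Type u) [CommRing A] [CommRing B]
    [Algebra A B] [Algebra.Etale A B] (m n : ℕ) (hm : 1 ≤ m) (hmn : m ≤ n) :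
    letI : Algebra (TruncatedWittVector p n A) (TruncatedWittVector p m A) :=
      (TruncatedWittVector.truncate hmn).toAlgebra
    letI : Algebra (TruncatedWittVector p n A) (TruncatedWittVector p n B) :=
      (TruncatedWittVector.map (algebraMap A B)).toAlgebra
    ∃ F : (TruncatedWittVector p m A ⊗[TruncatedWittVector p n A] TruncatedWittVector p n B)
        →+* TruncatedWittVector p m B,
      (∀ (a : TruncatedWittVector p m A) (b : TruncatedWittVector p n B),
        F (a ⊗ₜ b) =
          TruncatedWittVector.map (algebraMap A B) a * TruncatedWittVector.truncate hmn b) ∧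
      Function.Bijective F := by
  letI alg1 : Algebra (TruncatedWittVector p n A) (TruncatedWittVector p m A) :=
    (TruncatedWittVector.truncate hmn).toAlgebra
  letI alg2 : Algebra (TruncatedWittVector p n A) (TruncatedWittVector p n B) :=
    (TruncatedWittVector.map (algebraMap A B)).toAlgebra
  letI alg3 : Algebra (TruncatedWittVector p n A) (TruncatedWittVector p m B) :=
    ((TruncatedWittVector.map (algebraMap A B)).comp
      (TruncatedWittVector.truncate hmn)).toAlgebra
  have hcomm : ∀ x : TruncatedWittVector p n A,
      TruncatedWittVector.truncate hmn (TruncatedWittVector.map (algebraMap A B) x)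
      = TruncatedWittVector.map (algebraMap A B) (TruncatedWittVector.truncate hmn x) := by
    intro x
    apply TruncatedWittVector.ext
    intro i
    rw [TruncatedWittVector.coeff_truncate, TruncatedWittVector.map_coeff',
      TruncatedWittVector.map_coeff', TruncatedWittVector.coeff_truncate]
  let f₁ : TruncatedWittVector p m A →ₐ[TruncatedWittVector p n A]
      TruncatedWittVector p m B :=
    { toRingHom := TruncatedWittVector.map (algebraMap A B)
      commutes' := fun x => rfl }
  let f₂ : TruncatedWittVector p n B →ₐ[TruncatedWittVector p n A]
      TruncatedWittVector p m B :=
    { toRingHom := TruncatedWittVector.truncate hmn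
      commutes' := fun x => hcomm x }
  let F' := Algebra.TensorProduct.lift f₁ f₂ (fun _ _ => Commute.all _ _)
  let F := F'.toRingHom
  have hF : ∀ (a : TruncatedWittVector p m A) (b : TruncatedWittVector p n B),
      F (a ⊗ₜ b) = TruncatedWittVector.map (algebraMap A B) a *
        TruncatedWittVector.truncate hmn b := by
    intro a b
    show F' (a ⊗ₜ b) = _
    rw [Algebra.TensorProduct.lift_tmul]
    rfl
  -- the inverse
  let ρ : TruncatedWittVector p m B → TruncatedWittVector p n B :=
    fun x => WittVector.truncate n x.out
  have hρ : Function.RightInverse ρ (TruncatedWittVector.truncate hmn) := by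
    intro x
    show TruncatedWittVector.truncate hmn (WittVector.truncate n x.out) = x
    rw [TruncatedWittVector.truncate_wittVector_truncate]
    exact TruncatedWittVector.truncateFun_out x
  let ψ : TruncatedWittVector p n B →+*
      (TruncatedWittVector p m A ⊗[TruncatedWittVector p n A] TruncatedWittVector p n B) :=
    (Algebra.TensorProduct.includeRight).toRingHom
  have hψ_apply : ∀ b, ψ b = (1 : TruncatedWittVector p m A) ⊗ₜ b := fun b => rfl
  have hsmul1 : ∀ α : TruncatedWittVector p n A,
      ψ (TruncatedWittVector.map (algebraMap A B) α)
        = (TruncatedWittVector.truncate hmn α) ⊗ₜ 1 := by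
    intro α
    have h1 : TruncatedWittVector.map (algebraMap A B) α
        = α • (1 : TruncatedWittVector p n B) := by
      rw [Algebra.smul_def, mul_one]
      rfl
    rw [hψ_apply, h1, TensorProduct.tmul_smul, TensorProduct.smul_tmul',
      Algebra.smul_def, mul_one]
    rfl
  have hkerψ : ∀ z ∈ RingHom.ker (TruncatedWittVector.truncate (p := p) (R := B) hmn),
      ψ z = 0 := by
    intro z hz
    obtain ⟨ζ, rfl⟩ := WittVector.truncate_surjective p n B z
    rw [RingHom.mem_ker, TruncatedWittVector.truncate_wittVector_truncate] at hz
    have hζ : ∀ i < m, ζ.coeff i = 0 :=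
      (WittVector.mem_ker_truncate m ζ).1 (RingHom.mem_ker.2 hz)
    obtain ⟨ν, hν, hη⟩ := WittVector.key_decomp (p := p) (A := A) (B := B) m n hmn ζ hζ
    have hψν : ∀ x ∈ Submodule.span ℤ
        {w : WittVector p B | ∃ (α : WittVector p A) (y : WittVector p B),
          (∀ i < m, α.coeff i = 0) ∧ w = WittVector.map (algebraMap A B) α * y},
        ψ (WittVector.truncate n x) = 0 := by
      intro x hx
      induction hx using Submodule.span_induction with
      | mem w hw =>
        obtain ⟨α, y, hαlow, rfl⟩ := hw
        rw [map_mul, map_mul, ← TruncatedWittVector.truncate_map', hsmul1]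
        have hα0 : TruncatedWittVector.truncate hmn (WittVector.truncate n α) = 0 := by
          rw [TruncatedWittVector.truncate_wittVector_truncate]
          exact RingHom.mem_ker.1 ((WittVector.mem_ker_truncate m α).2 hαlow)
        rw [hα0, TensorProduct.zero_tmul, zero_mul]
      | zero => rw [map_zero, map_zero]
      | add x y _ _ hx hy => rw [map_add, map_add, hx, hy, add_zero]
      | smul a x _ hx => rw [map_zsmul, map_zsmul, hx, smul_zero]
    have hsplit : WittVector.truncate n ζ
        = WittVector.truncate n ν + WittVector.truncate n (ζ - ν) := by
      rw [← map_add, add_sub_cancel]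
    rw [hsplit, map_add, hψν ν hν, RingHom.mem_ker.1 hη, map_zero, add_zero]
  let G := RingHom.liftOfRightInverse
    (TruncatedWittVector.truncate (p := p) (R := B) hmn) ρ hρ ⟨ψ, hkerψ⟩
  have hGtr : ∀ b : TruncatedWittVector p n B,
      G (TruncatedWittVector.truncate hmn b) = ψ b := fun b =>
    RingHom.liftOfRightInverse_comp_apply _ _ hρ ⟨ψ, hkerψ⟩ b
  have hGF : ∀ t, G (F t) = t := by
    intro t
    induction t with
    | zero => rw [map_zero, map_zero]
    | tmul a b =>
      rw [hF, map_mul]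
      obtain ⟨α', rfl⟩ := TruncatedWittVector.truncate_surjective (p := p) (R := A) hmn a
      have h1 : TruncatedWittVector.map (algebraMap A B)
          (TruncatedWittVector.truncate hmn α')
          = TruncatedWittVector.truncate hmn (TruncatedWittVector.map (algebraMap A B) α') :=
        (hcomm α').symm
      rw [h1, hGtr, hGtr, hsmul1, hψ_apply, Algebra.TensorProduct.tmul_mul_tmul,
        one_mul, mul_one]
    | add x y hx hy => rw [map_add, map_add, hx, hy]
  have hsurj : Function.Surjective F := by
    intro x
    refine ⟨(1 : TruncatedWittVector p m A) ⊗ₜ ρ x, ?_⟩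
    rw [hF, map_one, one_mul]
    exact hρ x
  exact ⟨F, hF, Function.LeftInverse.injective hGF, hsurj⟩
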